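/- Suppose a positive decreasing function L with L(ε₀) ≥ 1 satisfies the growth condition 2^{[L(ε₁)]} + … + 2^{[L(ε_k)]} ≤ C·2^{[L(ε_{k+1})]} for all k ≥ 1 and some constant C > 0. Then for each k the quantity k + Σ_{l=1}^{[L(ε_{k+1})]} 2^l/2^{2(l−1)} + ((2b_k)² − (2a_k)²)/2^{2([L(ε_{k+1})]−1)} is bounded above by C′·k for a constant C′ depending only on C, where a_k = 2^{[L(ε₁)]} + 2Σ_{j=2}^{k} 2^{[L(ε_j)]} − k + 1 and b_k = 2^{[L(ε₁)]} + 2Σ_{j=2}^{k+1} 2^{[L(ε_j)]} − k − 1. -/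

import Mathlib

/-!
Mass-bound estimate in the proof of the key lemma: under the growth condition
`2^{[L(ε₁)]} + … + 2^{[L(ε_k)]} ≤ C·2^{[L(ε_{k+1})]}`, the quantity
`k + Σ_{l=1}^{[L(ε_{k+1})]} 2^l/2^{2(l−1)} + ((2b_k)² − (2a_k)²)/2^{2([L(ε_{k+1})]−1)}`
is bounded above by `C′·k`, with `C′` depending only on `C`.
-/

lemma geom_aux_eq (M : ℕ) :
    (∑ l ∈ Finset.Icc 1 M, (2 : ℝ) ^ l / 2 ^ (2 * (l - 1))) = 4 - 4 * (1/2 : ℝ) ^ M := by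
  induction M with
  | zero => simp
  | succ n ih =>
    rw [Finset.sum_Icc_succ_top (by omega), ih]
    have h1 : (n + 1) - 1 = n := by omega
    have h2 : (2 : ℝ) ^ (n + 1) / 2 ^ (2 * n) = 2 * (1/2 : ℝ) ^ n := by
      rw [pow_succ, two_mul, pow_add]
      field_simp
      ring_nf
      rw [← mul_pow]
      norm_num
    rw [h1, h2]
    rw [pow_succ]
    ring

lemma geom_aux (M : ℕ) :
    (∑ l ∈ Finset.Icc 1 M, (2 : ℝ) ^ l / 2 ^ (2 * (l - 1))) ≤ 4 := by
  rw [geom_aux_eq]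
  have : (0:ℝ) ≤ 4 * (1/2 : ℝ) ^ M := by positivity
  linarith

theorem mass_bound_estimate (C : ℝ) (hC : 0 < C) :
    ∃ C' : ℝ, 0 < C' ∧
      ∀ (L : ℝ → ℝ) (ε : ℕ → ℝ) (ε₀ : ℝ),
        (∀ x, 0 < x → x ≤ ε₀ → 0 < L x) →
        (∀ x y, 0 < x → x ≤ y → y ≤ ε₀ → L y ≤ L x) →
        1 ≤ L ε₀ →
        (∀ j, 0 < ε j) → (∀ j, ε (j + 1) ≤ ε j) → (∀ j, ε j ≤ ε₀) →
        (∀ k : ℕ, 1 ≤ k →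
          (∑ j ∈ Finset.Icc 1 k, (2 : ℝ) ^ ⌊L (ε j)⌋₊) ≤
            C * 2 ^ ⌊L (ε (k + 1))⌋₊) →
        ∀ k : ℕ, 1 ≤ k →
          (let ak : ℝ := 2 ^ ⌊L (ε 1)⌋₊ +
              2 * (∑ j ∈ Finset.Icc 2 k, (2 : ℝ) ^ ⌊L (ε j)⌋₊) - k + 1;
           let bk : ℝ := 2 ^ ⌊L (ε 1)⌋₊ +
              2 * (∑ j ∈ Finset.Icc 2 (k + 1), (2 : ℝ) ^ ⌊L (ε j)⌋₊) - k - 1;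
           (k : ℝ) +
              (∑ l ∈ Finset.Icc 1 ⌊L (ε (k + 1))⌋₊,
                (2 : ℝ) ^ l / 2 ^ (2 * (l - 1))) +
              ((2 * bk) ^ 2 - (2 * ak) ^ 2) / 2 ^ (2 * (⌊L (ε (k + 1))⌋₊ - 1))
            ≤ C' * k) := by
  refine ⟨128 * C + 69, by linarith, ?_⟩
  intro L ε ε₀ hLpos hLdec hL1 hεpos hεdec hεle hgrow k hk
  dsimp only
  -- floor ≥ 1 facts
  have hfloor : ∀ j : ℕ, 1 ≤ ⌊L (ε j)⌋₊ := by
    intro j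
    have h1 : L ε₀ ≤ L (ε j) := hLdec (ε j) ε₀ (hεpos j) (hεle j) le_rfl
    have : (1 : ℝ) ≤ L (ε j) := le_trans hL1 h1
    exact Nat.le_floor (by exact_mod_cast this)
  set M := ⌊L (ε (k + 1))⌋₊ with hM
  set P : ℝ := 2 ^ ⌊L (ε 1)⌋₊ with hP
  set T : ℝ := ∑ j ∈ Finset.Icc 2 k, (2 : ℝ) ^ ⌊L (ε j)⌋₊ with hT
  set Q : ℝ := 2 ^ M with hQ
  -- split the growth sum
  have hsplit : (∑ j ∈ Finset.Icc 1 k, (2 : ℝ) ^ ⌊L (ε j)⌋₊) = P + T := by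
    have hins : Finset.Icc 1 k = insert 1 (Finset.Icc 2 k) := by
      ext x; simp only [Finset.mem_Icc, Finset.mem_insert]; omega
    rw [hins, Finset.sum_insert (by simp)]
  have hPT : P + T ≤ C * Q := by
    have := hgrow k hk
    rw [hsplit] at this
    exact this
  -- the top sum
  have htop : (∑ j ∈ Finset.Icc 2 (k + 1), (2 : ℝ) ^ ⌊L (ε j)⌋₊) = T + Q := by
    rw [Finset.sum_Icc_succ_top (by omega)]
  rw [htop]
  have hM1 : 1 ≤ M := hfloor (k + 1)
  have hQ2 : (2 : ℝ) ≤ Q := by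
    calc (2:ℝ) = 2 ^ 1 := by norm_num
    _ ≤ 2 ^ M := by exact pow_le_pow_right₀ (by norm_num) hM1
  have hP2 : (2 : ℝ) ≤ P := by
    calc (2:ℝ) = 2 ^ 1 := by norm_num
    _ ≤ 2 ^ ⌊L (ε 1)⌋₊ := by exact pow_le_pow_right₀ (by norm_num) (hfloor 1)
  have hT0 : 0 ≤ T := Finset.sum_nonneg fun j _ => by positivity
  -- denominator
  have hden : (2 : ℝ) ^ (2 * (M - 1)) = Q ^ 2 / 4 := by
    obtain ⟨m, hm⟩ : ∃ m, M = m + 1 := ⟨M - 1, by omega⟩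
    rw [hQ, hm]
    have h1 : 2 * (m + 1 - 1) = 2 * m := by omega
    rw [h1, ← pow_mul]
    have h2 : (m + 1) * 2 = 2 * m + 2 := by ring
    rw [h2, pow_add]
    norm_num
  have hgeom := geom_aux M
  have hk1 : (1 : ℝ) ≤ (k : ℝ) := by exact_mod_cast hk
  -- bound the difference term
  have hdiff : ((2 * (P + 2 * (T + Q) - k - 1)) ^ 2 - (2 * (P + 2 * T - k + 1)) ^ 2) /
      2 ^ (2 * (M - 1)) ≤ 128 * C + 64 := by
    rw [hden, div_le_iff₀ (by positivity)]
    have hQ0 : (0:ℝ) < Q := by linarith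
    nlinarith [mul_nonneg (sub_nonneg.2 hQ2) (mul_nonneg hC.le hQ0.le),
      mul_le_mul_of_nonneg_left hPT (by linarith : (0:ℝ) ≤ 16 * Q),
      sq_nonneg Q, mul_pos hQ0 hQ0,
      mul_nonneg (sub_nonneg.2 hQ2) hT0,
      mul_nonneg (sub_nonneg.2 hQ2) (by linarith : (0:ℝ) ≤ Q),
      mul_nonneg (sub_nonneg.2 hQ2) (by linarith : (0:ℝ) ≤ P),
      mul_nonneg (sub_nonneg.2 hQ2) (sub_nonneg.2 hk1)]
  nlinarith [hgeom, hdiff, hk1, hC.le, mul_le_mul_of_nonneg_left hk1 (by linarith : (0:ℝ) ≤ 128 * C + 68)]
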